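/- Let H be a Hall universal group. Then the group Inn(H) of inner automorphisms of H, i.e., the range of the conjugation homomorphism H → Aut(H) sending a to the automorphism x ↦ a x a⁻¹, is dense in Aut(H). -/

import Mathlib

/-- A group `H` is a *Hall universal group* if it is countable, locally finite,
every finite group embeds into it, and any two isomorphic finite subgroups are
conjugate in `H`.  (Philip Hall's universal locally finite group is the unique
such group up to isomorphism.) -/
structure IsHallUniversal (H : Type*) [Group H] : Prop where
  /-- `H` is countable. -/
  countable : Countable H
  /-- `H` is locally finite: every finitely generated subgroup is finite. -/
  locallyFinite : ∀ S : Subgroup H, S.FG → Finite S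
  /-- Every finite group embeds into `H`. -/
  embedsFinite : ∀ (G : Type) [Group G] [Finite G], ∃ f : G →* H, Function.Injective f
  /-- Any two isomorphic finite subgroups of `H` are conjugate in `H`. -/
  conjIso : ∀ A B : Subgroup H, Finite A → Finite B → Nonempty (A ≃* B) →
    ∃ h : H, Subgroup.map (MulAut.conj h).toMonoidHom A = B

/-- The topology of pointwise convergence on `Aut H`: the topology induced by viewing an
automorphism `f` as the function `f : H → H` in the product space `H → H`, where `H`
carries the discrete topology. -/
instance hallAutTopology (H : Type*) [Group H] : TopologicalSpace (MulAut H) :=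
  letI : TopologicalSpace H := ⊥
  TopologicalSpace.induced (fun f : MulAut H => (f : H → H)) Pi.topologicalSpace

/-- If `u v : A →* C` are two injective homomorphisms into a finite group `C`, then the
left-translation actions of `A` on `C` through `u` and `v` are intertwined by some
permutation of `C`. -/
private lemma hall_key {A C : Type*} [Group A] [Group C] [Finite C]
    (u v : A →* C) (hu : Function.Injective u) (hv : Function.Injective v) :
    ∃ σ : Equiv.Perm C, ∀ (a : A) (c : C), σ (u a * c) = v a * σ c := by
  classical
  haveI : Finite A := Finite.of_injective u hu
  have bij : ∀ w : A →* C, Function.Injective w →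
      Function.Bijective (fun p : A × Quotient (QuotientGroup.rightRel w.range) =>
        w p.1 * p.2.out) := by
    intro w hw
    constructor
    · rintro ⟨a, q⟩ ⟨a', q'⟩ h
      simp only at h
      have hq : q = q' := by
        have hrel : QuotientGroup.rightRel w.range q.out q'.out := by
          rw [QuotientGroup.rightRel_apply]
          refine ⟨a'⁻¹ * a, ?_⟩
          have hout : q'.out = (w a')⁻¹ * (w a * q.out) := by rw [h]; group
          rw [map_mul, map_inv, hout]
          group
        have := Quotient.sound hrel
        rwa [Quotient.out_eq, Quotient.out_eq] at this
      subst hq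
      rw [hw (mul_right_cancel h)]
    · intro c
      set q : Quotient (QuotientGroup.rightRel w.range) := Quotient.mk _ c with hqdef
      have hrel : QuotientGroup.rightRel w.range q.out c :=
        Quotient.exact (Quotient.out_eq q)
      obtain ⟨a, ha⟩ := QuotientGroup.rightRel_apply.mp hrel
      exact ⟨⟨a, q⟩, by simp only; rw [ha]; group⟩
  haveI : Finite (Quotient (QuotientGroup.rightRel u.range)) := Quotient.finite _
  haveI : Finite (Quotient (QuotientGroup.rightRel v.range)) := Quotient.finite _
  have hcard : Nat.card (Quotient (QuotientGroup.rightRel u.range)) =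
      Nat.card (Quotient (QuotientGroup.rightRel v.range)) := by
    have h1 := Nat.card_eq_of_bijective _ (bij u hu)
    have h2 := Nat.card_eq_of_bijective _ (bij v hv)
    rw [Nat.card_prod] at h1 h2
    have hA : 0 < Nat.card A := Nat.card_pos
    exact Nat.eq_of_mul_eq_mul_left hA (h1.trans h2.symm)
  obtain ⟨τ⟩ := Finite.card_eq.mp hcard
  let eu := Equiv.ofBijective _ (bij u hu)
  let ev := Equiv.ofBijective _ (bij v hv)
  refine ⟨eu.symm.trans ((Equiv.prodCongr (Equiv.refl A) τ).trans ev), ?_⟩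
  intro a c
  obtain ⟨⟨a₀, q⟩, rfl⟩ := eu.surjective c
  have h1 : u a * eu (a₀, q) = eu (a * a₀, q) := by
    show u a * (u a₀ * q.out) = u (a * a₀) * q.out
    rw [map_mul, mul_assoc]
  rw [h1]
  simp only [Equiv.trans_apply, Equiv.symm_apply_apply, Equiv.prodCongr_apply,
    Equiv.coe_refl, Prod.map, id_eq]
  show ev (a * a₀, τ q) = v a * ev (a₀, τ q)
  show v (a * a₀) * (τ q).out = v a * (v a₀ * (τ q).out)
  rw [map_mul, mul_assoc]

/-- Homogeneity of a Hall universal group: every injective homomorphism from a finite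
subgroup into `H` is realized by conjugation by an element of `H`. -/
private lemma hall_realize {H : Type*} [Group H] (hH : IsHallUniversal H)
    (A : Subgroup H) (hA : Finite A) (φ : A →* H) (hφ : Function.Injective φ) :
    ∃ h : H, ∀ a : A, h * (a : H) * h⁻¹ = φ a := by
  classical
  haveI := hA
  set B := φ.range with hBdef
  haveI hB : Finite B := Finite.of_surjective φ.rangeRestrict φ.rangeRestrict_surjective
  have hAfg : A.FG := (Subgroup.fg_iff A).mpr ⟨(A : Set H), Subgroup.closure_eq A, Set.toFinite _⟩
  have hBfg : B.FG := (Subgroup.fg_iff B).mpr ⟨(B : Set H), Subgroup.closure_eq B, Set.toFinite _⟩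
  set C := A ⊔ B with hCdef
  have hCfg : C.FG := by
    obtain ⟨S, hS, hSfin⟩ := (Subgroup.fg_iff A).mp hAfg
    obtain ⟨T, hT, hTfin⟩ := (Subgroup.fg_iff B).mp hBfg
    exact (Subgroup.fg_iff C).mpr ⟨S ∪ T, by rw [Subgroup.closure_union, hS, hT], hSfin.union hTfin⟩
  haveI hC : Finite C := hH.locallyFinite C hCfg
  obtain ⟨n, ⟨e⟩⟩ := Finite.exists_equiv_fin ↥C
  obtain ⟨ψ₀, hψ₀⟩ := hH.embedsFinite (Equiv.Perm (Fin n))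
  set ψ : Equiv.Perm ↥C →* H := ψ₀.comp (Equiv.Perm.viaEmbeddingHom e.toEmbedding) with hψdef
  have hψ : Function.Injective ψ :=
    hψ₀.comp (Equiv.Perm.viaEmbeddingHom_injective e.toEmbedding)
  set lC : ↥C →* Equiv.Perm ↥C := MulAction.toPermHom ↥C ↥C with hlCdef
  have hlC : Function.Injective lC := MulAction.toPerm_injective
  set χ : ↥C →* H := ψ.comp lC with hχdef
  have hχ : Function.Injective χ := hψ.comp hlC
  haveI : Finite χ.range := Finite.of_surjective χ.rangeRestrict χ.rangeRestrict_surjective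
  obtain ⟨h₀, hh₀⟩ := hH.conjIso C χ.range hC inferInstance ⟨MonoidHom.ofInjective hχ⟩
  have mem : ∀ c : ↥C, h₀ * (c : H) * h₀⁻¹ ∈ χ.range := by
    intro c
    rw [← hh₀]
    exact Subgroup.mem_map.mpr ⟨(c : H), c.2, by simp [MulAut.conj_apply]⟩
  set j : ↥C →* ↥χ.range :=
    MonoidHom.codRestrict (((MulAut.conj h₀).toMonoidHom).comp C.subtype) χ.range mem with hjdef
  set π : ↥C →* ↥C := ((MonoidHom.ofInjective hχ).symm.toMonoidHom).comp j with hπdef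
  have hπχ : ∀ c : ↥C, χ (π c) = h₀ * (c : H) * h₀⁻¹ := by
    intro c
    show χ ((MonoidHom.ofInjective hχ).symm (j c)) = _
    rw [MonoidHom.apply_ofInjective_symm]
    simp [hjdef, MulAut.conj_apply]
  have hπ : Function.Injective π := by
    intro c c' hcc
    have h1 : h₀ * (c : H) * h₀⁻¹ = h₀ * (c' : H) * h₀⁻¹ := by
      rw [← hπχ c, ← hπχ c', hcc]
    exact Subtype.ext (mul_left_cancel (mul_right_cancel h1))
  have hAle : A ≤ C := le_sup_left
  set ιA : ↥A →* ↥C := Subgroup.inclusion hAle with hιAdef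
  have hφmem : ∀ a : ↥A, φ a ∈ C := fun a => (le_sup_right : B ≤ C) ⟨a, rfl⟩
  set φC : ↥A →* ↥C := MonoidHom.codRestrict φ C hφmem with hφCdef
  have hu : Function.Injective (π.comp ιA) := hπ.comp (Subgroup.inclusion_injective hAle)
  have hv : Function.Injective (π.comp φC) := by
    refine hπ.comp ?_
    intro a a' h
    exact hφ (congrArg Subtype.val h)
  obtain ⟨σ, hσ⟩ := hall_key (π.comp ιA) (π.comp φC) hu hv
  refine ⟨h₀⁻¹ * ψ σ * h₀, ?_⟩
  intro a
  have hperm : σ * lC (π (ιA a)) * σ⁻¹ = lC (π (φC a)) := by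
    apply Equiv.ext
    intro x
    simp only [Equiv.Perm.mul_apply]
    have := hσ a (σ⁻¹ x)
    simp only [MonoidHom.comp_apply] at this
    calc σ ((lC (π (ιA a))) (σ⁻¹ x)) = σ (π (ιA a) * σ⁻¹ x) := rfl
      _ = π (φC a) * σ (σ⁻¹ x) := this
      _ = π (φC a) * x := by rw [← Equiv.Perm.mul_apply, mul_inv_cancel, Equiv.Perm.one_apply]
      _ = (lC (π (φC a))) x := rfl
  have hψperm := congrArg ψ hperm
  rw [map_mul, map_mul, map_inv] at hψperm
  have hχu : ψ (lC (π (ιA a))) = h₀ * (a : H) * h₀⁻¹ := by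
    have := hπχ (ιA a)
    exact this
  have hχv : ψ (lC (π (φC a))) = h₀ * φ a * h₀⁻¹ := by
    have := hπχ (φC a)
    exact this
  rw [hχu, hχv] at hψperm
  -- hψperm : ψ σ * (h₀ * a * h₀⁻¹) * (ψ σ)⁻¹ = h₀ * φ a * h₀⁻¹
  have : h₀⁻¹ * (ψ σ * (h₀ * (a : H) * h₀⁻¹) * (ψ σ)⁻¹) * h₀ = h₀⁻¹ * (h₀ * φ a * h₀⁻¹) * h₀ := by
    rw [hψperm]
  calc h₀⁻¹ * ψ σ * h₀ * (a : H) * (h₀⁻¹ * ψ σ * h₀)⁻¹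
      = h₀⁻¹ * (ψ σ * (h₀ * (a : H) * h₀⁻¹) * (ψ σ)⁻¹) * h₀ := by group
    _ = h₀⁻¹ * (h₀ * φ a * h₀⁻¹) * h₀ := this
    _ = φ a := by group

/-- **`Inn H` is dense in `Aut H`.**  The range of the conjugation homomorphism
`MulAut.conj : H → Aut H` (i.e. the group of inner automorphisms of `H`) is dense in
`Aut H` with the topology of pointwise convergence. -/
theorem hallUniversal_inn_dense
    (H : Type*) [Group H] (hH : IsHallUniversal H) :
    Dense (Set.range (fun a : H => MulAut.conj a)) := by
  classical
  letI : TopologicalSpace H := ⊥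
  haveI : DiscreteTopology H := ⟨rfl⟩
  rw [dense_iff_inter_open]
  rintro U hU ⟨f, hf⟩
  obtain ⟨V, hV, rfl⟩ := isOpen_induced_iff.mp hU
  rw [isOpen_pi_iff] at hV
  obtain ⟨I, w, hw, hsub⟩ := hV _ hf
  have hAfg : (Subgroup.closure (↑I : Set H)).FG :=
    (Subgroup.fg_iff _).mpr ⟨(↑I : Set H), rfl, I.finite_toSet⟩
  haveI hA : Finite (Subgroup.closure (↑I : Set H)) := hH.locallyFinite _ hAfg
  set φ : ↥(Subgroup.closure (↑I : Set H)) →* H :=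
    (MulEquiv.toMonoidHom f).comp (Subgroup.closure (↑I : Set H)).subtype with hφdef
  have hφ : Function.Injective φ := by
    intro x y hxy
    exact Subtype.ext (f.injective hxy)
  obtain ⟨h, hh⟩ := hall_realize hH _ hA φ hφ
  refine ⟨MulAut.conj h, ?_, ⟨h, rfl⟩⟩
  apply hsub
  intro i hi
  have hval : (MulAut.conj h) i = f i := by
    have := hh ⟨i, Subgroup.subset_closure hi⟩
    exact this
  show (MulAut.conj h : H → H) i ∈ w i
  rw [hval]
  exact (hw i hi).2
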